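/- Let μ and ν be strictly positive functions on a finite nonempty set 𝒵 with μ(z) ≤ ν(z) for all z ∈ 𝒵. If D_KL(μ‖ν) ≤ ‖μ‖₁, then D_KL(μ‖ν) ≥ ‖μ − ν‖₁² / (7‖μ‖₁). -/

import Mathlib

open scoped BigOperators

/-- Unnormalized Kullback–Leibler divergence of two positive vectors on a finite set. -/
noncomputable def KLdiv {Z : Type*} [Fintype Z] (α β : Z → ℝ) : ℝ :=
  (∑ z, (β z - α z)) + ∑ z, α z * Real.log (α z / β z)

/-- ℓ¹ norm of a vector on a finite set. -/
noncomputable def l1 {Z : Type*} [Fintype Z] (v : Z → ℝ) : ℝ := ∑ z, |v z|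

/-- `log x ≤ (x - x⁻¹)/2` for `x ≥ 1`. -/
lemma log_le_half_sub_inv {x : ℝ} (hx : 1 ≤ x) : Real.log x ≤ (x - x⁻¹) / 2 := by
  have hx0 : 0 < x := lt_of_lt_of_le one_pos hx
  have h1 : 0 ≤ Real.log x := Real.log_nonneg hx
  have := Real.self_le_sinh_iff.mpr h1
  rwa [Real.sinh_log hx0] at this

/-- Pointwise bound: for `0 < a ≤ b`, `(b-a)²/(2b) ≤ (b - a) + a log(a/b)`. -/
lemma pointwise_bound {a b : ℝ} (ha : 0 < a) (hab : a ≤ b) :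
    (b - a) ^ 2 / (2 * b) ≤ (b - a) + a * Real.log (a / b) := by
  have hb : 0 < b := lt_of_lt_of_le ha hab
  have hx : (1 : ℝ) ≤ b / a := (one_le_div ha).mpr hab
  have hlog := log_le_half_sub_inv hx
  have hinv : (b / a)⁻¹ = a / b := by rw [inv_div]
  rw [hinv] at hlog
  have hlog2 : Real.log (a / b) = - Real.log (b / a) := by
    rw [← Real.log_inv, inv_div]
  rw [hlog2]
  have key : a * Real.log (b / a) ≤ a * ((b / a - a / b) / 2) :=
    mul_le_mul_of_nonneg_left hlog ha.le
  have h2 : a * ((b / a - a / b) / 2) = (b - a) - (b - a) ^ 2 / (2 * b) := by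
    field_simp
    ring
  nlinarith [key]

/-- Tangent line bound: `log t ≤ t / c - 1 + log c` for `t, c > 0`. -/
lemma log_tangent {t c : ℝ} (ht : 0 < t) (hc : 0 < c) :
    Real.log t ≤ t / c - 1 + Real.log c := by
  have := Real.log_le_sub_one_of_pos (div_pos ht hc)
  rw [Real.log_div ht.ne' hc.ne'] at this
  linarith

/-- Let `μ, ν` be strictly positive on a finite nonempty set with `μ ≤ ν`.
If `D_KL(μ‖ν) ≤ ‖μ‖₁` then `D_KL(μ‖ν) ≥ ‖μ − ν‖₁² / (7‖μ‖₁)`. -/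
theorem stmt6 {Z : Type*} [Fintype Z] [Nonempty Z] (μ ν : Z → ℝ)
    (hμ : ∀ z, 0 < μ z) (hν : ∀ z, 0 < ν z) (hle : ∀ z, μ z ≤ ν z)
    (h : KLdiv μ ν ≤ l1 μ) :
    KLdiv μ ν ≥ (l1 (fun z => μ z - ν z)) ^ 2 / (7 * l1 μ) := by
  set m : ℝ := ∑ z, μ z with hm_def
  set L : ℝ := ∑ z, (ν z - μ z) with hL_def
  have hm : 0 < m := Finset.sum_pos (fun z _ => hμ z) Finset.univ_nonempty
  have hL : 0 ≤ L := Finset.sum_nonneg fun z _ => sub_nonneg.mpr (hle z)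
  have hl1μ : l1 μ = m := by
    unfold l1; exact Finset.sum_congr rfl fun z _ => abs_of_pos (hμ z)
  have hl1d : l1 (fun z => μ z - ν z) = L := by
    unfold l1
    exact Finset.sum_congr rfl fun z _ => by
      rw [abs_of_nonpos (sub_nonpos.mpr (hle z))]; ring
  have hS : (0:ℝ) < m + L := by linarith
  have hSsum : ∑ z, ν z = m + L := by
    rw [hm_def, hL_def, ← Finset.sum_add_distrib]
    exact Finset.sum_congr rfl fun z _ => by ring
  -- D as a sum of pointwise terms
  have hD : KLdiv μ ν = ∑ z, ((ν z - μ z) + μ z * Real.log (μ z / ν z)) := by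
    unfold KLdiv; rw [← Finset.sum_add_distrib]
  -- Pointwise bound summed: Σ (ν-μ)²/(2ν) ≤ D
  have hsum_pt : ∑ z, (ν z - μ z) ^ 2 / (2 * ν z) ≤ KLdiv μ ν := by
    rw [hD]
    exact Finset.sum_le_sum fun z _ => pointwise_bound (hμ z) (hle z)
  -- Sedrakyan: L² / (2(m+L)) ≤ Σ (ν-μ)²/(2ν)
  have hCS : L ^ 2 / (2 * (m + L)) ≤ ∑ z, (ν z - μ z) ^ 2 / (2 * ν z) := by
    have := Finset.sq_sum_div_le_sum_sq_div Finset.univ (fun z => ν z - μ z)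
      (g := fun z => 2 * ν z) (fun z _ => mul_pos two_pos (hν z))
    have h2 : ∑ z, 2 * ν z = 2 * (m + L) := by
      rw [← Finset.mul_sum, hSsum]
    rwa [h2, ← hL_def] at this
  have hDL : L ^ 2 / (2 * (m + L)) ≤ KLdiv μ ν := le_trans hCS hsum_pt
  rw [hl1μ, hl1d, ge_iff_le]
  by_cases hcase : L ≤ (5/2) * m
  · -- easy case: 2(m+L) ≤ 7m
    have h7 : 2 * (m + L) ≤ 7 * m := by linarith
    have := div_le_div_of_nonneg_left (sq_nonneg L) (by positivity : (0:ℝ) < 2 * (m + L)) h7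
    linarith
  · -- contradiction case
    exfalso
    push_neg at hcase
    -- D ≥ L - m * log ((m+L)/m)
    have hr : (0:ℝ) < (m + L) / m := div_pos hS hm
    have hbound : ∀ z, -(ν z * (m / (m + L)) - μ z + μ z * Real.log ((m + L) / m)) ≤
        μ z * Real.log (μ z / ν z) := by
      intro z
      have hlog : Real.log (ν z / μ z) ≤ (ν z / μ z) / ((m + L) / m) - 1
          + Real.log ((m + L) / m) := log_tangent (div_pos (hν z) (hμ z)) hr
      have hlog2 : Real.log (μ z / ν z) = - Real.log (ν z / μ z) := by
        rw [← Real.log_inv, inv_div]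
      rw [hlog2]
      have := mul_le_mul_of_nonneg_left hlog (hμ z).le
      have hX : μ z * ((ν z / μ z) / ((m + L) / m)) = ν z * (m / (m + L)) := by
        have h1 : μ z ≠ 0 := (hμ z).ne'
        have h2 : m + L ≠ 0 := hS.ne'
        have h3 : m ≠ 0 := hm.ne'
        field_simp
      have heq : μ z * ((ν z / μ z) / ((m + L) / m) - 1 + Real.log ((m + L) / m))
          = ν z * (m / (m + L)) - μ z + μ z * Real.log ((m + L) / m) := by
        rw [← hX]; ring
      rw [heq] at this
      linarith
    have hsum2 : L - m * Real.log ((m + L) / m) ≤ KLdiv μ ν := by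
      rw [hD]
      have : ∑ z, -(ν z * (m / (m + L)) - μ z + μ z * Real.log ((m + L) / m)) ≤
          ∑ z, μ z * Real.log (μ z / ν z) :=
        Finset.sum_le_sum fun z _ => hbound z
      have hlhs : ∑ z, -(ν z * (m / (m + L)) - μ z + μ z * Real.log ((m + L) / m))
          = - m * Real.log ((m + L) / m) := by
        rw [Finset.sum_neg_distrib]
        have : ∑ z, (ν z * (m / (m + L)) - μ z + μ z * Real.log ((m + L) / m))
            = (m + L) * (m / (m + L)) - m + m * Real.log ((m + L) / m) := by
          rw [Finset.sum_add_distrib, Finset.sum_sub_distrib, ← Finset.sum_mul, hSsum,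
            ← Finset.sum_mul, ← hm_def]
        rw [this]
        field_simp
        ring
      rw [Finset.sum_add_distrib, ← hL_def]
      nlinarith [hlhs ▸ this]
    -- log r ≤ r / e, e > (27/10)
    set r : ℝ := (m + L) / m with hr_def
    have hr35 : (7/2) < r := by
      rw [hr_def, lt_div_iff₀ hm]; linarith
    have hloge : Real.log r ≤ r / Real.exp 1 := by
      have h1 : Real.log (r / Real.exp 1) ≤ r / Real.exp 1 - 1 :=
        Real.log_le_sub_one_of_pos (div_pos hr (Real.exp_pos 1))
      rw [Real.log_div (ne_of_gt hr) (Real.exp_ne_zero 1), Real.log_exp] at h1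
      linarith
    have he : ((27/10):ℝ) < Real.exp 1 := by
      have := Real.exp_one_gt_d9; linarith
    have hloge2 : Real.log r ≤ r / (27/10) := by
      have : r / Real.exp 1 ≤ r / (27/10) :=
        div_le_div_of_nonneg_left (by linarith : (0:ℝ) ≤ r) (by norm_num) he.le
      linarith
    -- L - m log r > m
    have hLr : L = (r - 1) * m := by
      rw [hr_def]; field_simp; ring
    have hgt : m < L - m * Real.log r := by
      have h1 : m * Real.log r ≤ m * (r / (27/10)) := mul_le_mul_of_nonneg_left hloge2 hm.le
      have h2 : m * (7/2) < m * r := mul_lt_mul_of_pos_left hr35 hm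
      have h3 : L = m * r - m := by rw [hLr]; ring
      linarith
    rw [hl1μ] at h
    linarith
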